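/- Let r be a natural number, b₁, …, b_r a basis of the ℚ-vector space ℚ^r, and C = {Σ_i tᵢ·bᵢ : tᵢ ∈ ℚ, tᵢ ≥ 0} the full polyhedral cone spanned by this basis. Let f be a polynomial in r variables with rational coefficients such that f(x) ∈ ℤ for every x ∈ ℤ^r with x ∈ C. Then f(x) ∈ ℤ for every x ∈ ℤ^r. -/

import Mathlib

open Polynomial

lemma intval : ∀ (d : ℕ) (g : Polynomial ℚ), g.natDegree ≤ d → ∀ N : ℤ,
    (∀ n : ℤ, N ≤ n → ∃ z : ℤ, g.eval (n : ℚ) = (z : ℚ)) →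
    ∀ m : ℤ, ∃ z : ℤ, g.eval (m : ℚ) = (z : ℚ) := by
  intro d
  induction d with
  | zero =>
    intro g hdeg N h m
    obtain ⟨a, rfl⟩ := Polynomial.natDegree_eq_zero.mp (Nat.le_zero.mp hdeg)
    obtain ⟨z, hz⟩ := h N le_rfl
    exact ⟨z, by simpa using hz⟩
  | succ d ih =>
    intro g hdeg N h m
    set g1 := g.comp (X + C 1) - g with hg1
    have hs : (X + C (1:ℚ)).natDegree = 1 := Polynomial.natDegree_X_add_C 1
    have hsl : (X + C (1:ℚ)).leadingCoeff = 1 := (Polynomial.monic_X_add_C 1).leadingCoeff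
    have hd1 : g1.natDegree ≤ d := by
      rcases le_or_gt g.natDegree d with hle | hlt
      · refine le_trans (Polynomial.natDegree_sub_le _ _) ?_
        rw [Polynomial.natDegree_comp, hs, mul_one]
        simp [hle]
      · have hdg : g.natDegree = d + 1 := le_antisymm hdeg hlt
        have hg0 : g ≠ 0 := by
          intro h0; rw [h0] at hdg; simp at hdg
        have hlc : (g.comp (X + C 1)).leadingCoeff = g.leadingCoeff := by
          rw [Polynomial.leadingCoeff_comp (by rw [hs]; exact one_ne_zero), hsl]
          simp
        have hcomp0 : g.comp (X + C 1) ≠ 0 := by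
          intro h0
          apply hg0
          rw [← Polynomial.leadingCoeff_eq_zero, ← hlc, h0, leadingCoeff_zero]
        have hdc : (g.comp (X + C 1)).degree = g.degree := by
          rw [Polynomial.degree_eq_natDegree hcomp0, Polynomial.degree_eq_natDegree hg0,
            Polynomial.natDegree_comp, hs, mul_one]
        have hlt2 := Polynomial.degree_sub_lt hdc hcomp0 hlc
        rw [hdc, Polynomial.degree_eq_natDegree hg0, hdg] at hlt2
        have hle2 : g1.degree ≤ (d : WithBot ℕ) :=
          Order.le_of_lt_succ (by exact_mod_cast hlt2)
        exact Polynomial.natDegree_le_iff_degree_le.mpr hle2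
    have hev : ∀ q : ℚ, g1.eval q = g.eval (q + 1) - g.eval q := by
      intro q; simp [hg1, Polynomial.eval_comp]
    have h1 : ∀ n : ℤ, N ≤ n → ∃ z : ℤ, g1.eval (n : ℚ) = (z : ℚ) := by
      intro n hn
      obtain ⟨z1, hz1⟩ := h (n + 1) (by omega)
      obtain ⟨z2, hz2⟩ := h n hn
      refine ⟨z1 - z2, ?_⟩
      rw [hev]; push_cast [← hz1, ← hz2]; ring
    have hall1 := ih g1 hd1 N h1
    -- downward induction
    have key : ∀ k : ℕ, ∃ z : ℤ, g.eval ((N - k : ℤ) : ℚ) = (z : ℚ) := by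
      intro k
      induction k with
      | zero => simpa using h N le_rfl
      | succ k ihk =>
        obtain ⟨z, hz⟩ := ihk
        obtain ⟨w, hw⟩ := hall1 (N - (k + 1))
        refine ⟨z - w, ?_⟩
        have h3 := hev ((N - (k + 1) : ℤ) : ℚ)
        rw [hw] at h3
        have h2 : ((N - (k+1) : ℤ) : ℚ) + 1 = ((N - k : ℤ) : ℚ) := by push_cast; ring
        rw [h2, hz] at h3
        push_cast at h3 ⊢
        linarith
    rcases le_or_gt N m with hm | hm
    · exact h m hm
    · obtain ⟨z, hz⟩ := key (N - m).toNat
      refine ⟨z, ?_⟩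
      rw [← hz]
      congr 1
      push_cast [Int.toNat_of_nonneg (by omega : (0:ℤ) ≤ N - m)]
      ring

lemma aeval_eval (r : ℕ) (u : Fin r → Polynomial ℚ) (f : MvPolynomial (Fin r) ℚ) (q : ℚ) :
    Polynomial.eval q (MvPolynomial.aeval u f)
      = MvPolynomial.eval (fun i => (u i).eval q) f := by
  induction f using MvPolynomial.induction_on with
  | C a => simp
  | add p p' hp hp' => simp [hp, hp']
  | mul_X p i hp => simp [hp]

theorem integer_valued_on_cone_integer_valued
    (r : ℕ) (b : Module.Basis (Fin r) ℚ (Fin r → ℚ))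
    (C : Set (Fin r → ℚ))
    (hC : C = {x | ∃ t : Fin r → ℚ, (∀ i, 0 ≤ t i) ∧ x = ∑ i, t i • b i})
    (f : MvPolynomial (Fin r) ℚ)
    (hf : ∀ x : Fin r → ℤ, (fun i => (x i : ℚ)) ∈ C →
      ∃ z : ℤ, MvPolynomial.eval (fun i => (x i : ℚ)) f = (z : ℚ)) :
    ∀ x : Fin r → ℤ, ∃ z : ℤ, MvPolynomial.eval (fun i => (x i : ℚ)) f = (z : ℚ) := by
  set w : Fin r → ℚ := ∑ i, b i with hw
  set d0 : ℕ := ∏ j, (w j).den with hd0def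
  have hd0 : 0 < d0 := Finset.prod_pos (fun j _ => (w j).pos)
  have hdvd : ∀ j, (w j).den ∣ d0 := fun j => Finset.dvd_prod_of_mem _ (Finset.mem_univ j)
  set v : Fin r → ℤ := fun j => (d0 / (w j).den : ℕ) * (w j).num with hvdef
  have hv : ∀ j, (v j : ℚ) = (d0 : ℚ) * w j := by
    intro j
    have h1 : ((d0 / (w j).den : ℕ) : ℚ) = (d0 : ℚ) / ((w j).den : ℚ) :=
      Nat.cast_div (hdvd j) (Nat.cast_ne_zero.mpr (w j).den_nz)
    calc (v j : ℚ) = (d0 : ℚ) / ((w j).den : ℚ) * ((w j).num : ℚ) := by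
          simp only [hvdef]; rw [Int.cast_mul, Int.cast_natCast, h1]
    _ = (d0 : ℚ) * (((w j).num : ℚ) / ((w j).den : ℚ)) := by ring
    _ = (d0 : ℚ) * w j := by rw [Rat.num_div_den]
  have hrw : ∀ i, b.repr w i = 1 := by
    intro i
    simp [hw, map_sum, Finsupp.finset_sum_apply, Module.Basis.repr_self, Finsupp.single_apply]
  intro x
  set xq : Fin r → ℚ := fun i => (x i : ℚ) with hxq
  set c : Fin r → ℚ := fun i => b.repr xq i with hcdef
  set N : ℤ := ∑ i, max 0 ⌈-c i / (d0 : ℚ)⌉ with hNdef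
  have hN : ∀ i, (⌈-c i / (d0 : ℚ)⌉ : ℤ) ≤ N := by
    intro i
    calc ⌈-c i / (d0 : ℚ)⌉ ≤ max 0 ⌈-c i / (d0 : ℚ)⌉ := le_max_right _ _
    _ ≤ N := Finset.single_le_sum (f := fun i => max 0 ⌈-c i / (d0 : ℚ)⌉)
        (fun j _ => le_max_left _ _) (Finset.mem_univ i)
  have hmem : ∀ n : ℤ, N ≤ n → (fun i => ((x i + n * v i : ℤ) : ℚ)) ∈ C := by
    intro n hn
    rw [hC]
    refine ⟨fun i => c i + n * d0, fun i => ?_, ?_⟩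
    · have h1 : (-c i / (d0 : ℚ)) ≤ (n : ℚ) := by
        calc -c i / (d0 : ℚ) ≤ (⌈-c i / (d0 : ℚ)⌉ : ℚ) := Int.le_ceil _
        _ ≤ (n : ℚ) := by exact_mod_cast le_trans (hN i) hn
      have h2 : -c i ≤ (n : ℚ) * d0 := by
        rw [div_le_iff₀ (by exact_mod_cast hd0)] at h1
        linarith
      dsimp only
      linarith
    · have hx : ∑ i, c i • b i = xq := b.sum_repr xq
      have hL : (fun i => ((x i + n * v i : ℤ) : ℚ)) = xq + ((n : ℚ) * d0) • w := by
        funext j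
        simp only [Pi.add_apply, Pi.smul_apply, smul_eq_mul, hxq]
        push_cast [hv j]
        ring
      rw [hL]
      rw [show ∑ i, (c i + (n : ℚ) * d0) • b i
            = ∑ i, c i • b i + ((n : ℚ) * d0) • ∑ i, b i by
          simp [add_smul, Finset.sum_add_distrib, Finset.smul_sum]]
      rw [hx, ← hw]
  set u : Fin r → Polynomial ℚ := fun i => Polynomial.C (x i : ℚ) + Polynomial.C (v i : ℚ) * Polynomial.X with hu
  have heval : ∀ q : ℚ, Polynomial.eval q (MvPolynomial.aeval u f)
      = MvPolynomial.eval (fun i => (x i : ℚ) + (v i : ℚ) * q) f := by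
    intro q
    have hpt : (fun i => Polynomial.eval q (u i)) = fun i => (x i : ℚ) + (v i : ℚ) * q := by
      funext i; simp [hu]
    rw [aeval_eval r u f q, hpt]
  have hyp : ∀ n : ℤ, N ≤ n → ∃ z : ℤ, (MvPolynomial.aeval u f).eval (n : ℚ) = (z : ℚ) := by
    intro n hn
    obtain ⟨z, hz⟩ := hf (fun i => x i + n * v i) (hmem n hn)
    have harg : (fun i => ((x i + n * v i : ℤ) : ℚ)) = fun i => (x i : ℚ) + (v i : ℚ) * (n : ℚ) := by
      funext i; push_cast; ring
    rw [harg] at hz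
    exact ⟨z, by rw [heval]; exact hz⟩
  obtain ⟨z, hz⟩ := intval (MvPolynomial.aeval u f).natDegree (MvPolynomial.aeval u f) le_rfl N hyp 0
  refine ⟨z, ?_⟩
  rw [← hz]
  push_cast
  rw [heval]
  simp
  rfl
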